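/- Let A, B, C, D be n×n complex flat unitary matrices (unitary matrices all of whose entries have modulus 1/√n). For j,k ∈ {1,…,n} define vectors ψ_{jk} = √n (a_{1j} b_{1k}, …, a_{nj} b_{nk})^T and φ_{jk} = √n (c_{1j} d_{1k}, …, c_{nj} d_{nk})^T in ℂⁿ. Then the block matrix W = (w_{jk})_{j,k=1}^n with w_{jk} = ψ_{jk} φ_{jk}^* ∈ M_n(ℂ) is bi-unitary: Σ_i w_{ij}^* w_{ik} = δ_{jk} I and Σ_i w_{ji}^* w_{ki} = δ_{jk} I for all j, k. -/

import Mathlib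

open Matrix Complex

/-- the Latin-square-type block matrix built from four flat
unitaries is bi-unitary. -/
theorem stmt5 (n : ℕ) (hn : 0 < n)
    (A B C D : Matrix (Fin n) (Fin n) ℂ)
    (hA : A ∈ Matrix.unitaryGroup (Fin n) ℂ)
    (hB : B ∈ Matrix.unitaryGroup (Fin n) ℂ)
    (hC : C ∈ Matrix.unitaryGroup (Fin n) ℂ)
    (hD : D ∈ Matrix.unitaryGroup (Fin n) ℂ)
    (hAflat : ∀ i j, ‖A i j‖ = 1 / Real.sqrt n)
    (hBflat : ∀ i j, ‖B i j‖ = 1 / Real.sqrt n)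
    (hCflat : ∀ i j, ‖C i j‖ = 1 / Real.sqrt n)
    (hDflat : ∀ i j, ‖D i j‖ = 1 / Real.sqrt n)
    (ψ φ : Fin n → Fin n → Fin n → ℂ)
    (hψ : ∀ j k l, ψ j k l = (Real.sqrt n : ℂ) * (A l j * B l k))
    (hφ : ∀ j k m, φ j k m = (Real.sqrt n : ℂ) * (C m j * D m k))
    (w : Fin n → Fin n → Matrix (Fin n) (Fin n) ℂ)
    (hw : ∀ j k, w j k = Matrix.of (fun l m => ψ j k l * star (φ j k m))) :
    (∀ j k, ∑ i, star (w i j) * w i k = if j = k then (1 : Matrix (Fin n) (Fin n) ℂ) else 0) ∧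
    (∀ j k, ∑ i, star (w j i) * w k i = if j = k then (1 : Matrix (Fin n) (Fin n) ℂ) else 0) := by
  have hn0 : (n : ℂ) ≠ 0 := Nat.cast_ne_zero.mpr hn.ne'
  have hs2 : (Real.sqrt n : ℂ) * (Real.sqrt n : ℂ) = (n : ℂ) := by
    norm_cast
    exact Real.mul_self_sqrt (Nat.cast_nonneg n)
  have hsr : star ((Real.sqrt n : ℝ) : ℂ) = ((Real.sqrt n : ℝ) : ℂ) := by
    rw [Complex.star_def, Complex.conj_ofReal]
  -- flatness as star z * z = 1/n
  have flat : ∀ (M : Matrix (Fin n) (Fin n) ℂ),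
      (∀ i j, ‖M i j‖ = 1 / Real.sqrt n) →
      ∀ i j, star (M i j) * M i j = (n : ℂ)⁻¹ := by
    intro M hM i j
    have h1 : Complex.normSq (M i j) = (n : ℝ)⁻¹ := by
      rw [← Complex.sq_norm, hM i j]
      rw [div_pow, one_pow, Real.sq_sqrt (Nat.cast_nonneg n), one_div]
    have h2 : star (M i j) * M i j = (Complex.normSq (M i j) : ℂ) := by
      rw [Complex.star_def, Complex.normSq_eq_conj_mul_self]
    rw [h2, h1]
    push_cast
    ring
  have flatA := flat A hAflat
  have flatB := flat B hBflat
  have flatC := flat C hCflat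
  have flatD := flat D hDflat
  -- unitary relations
  have hAu : ∀ j k, (∑ p, star (A p j) * A p k) = if j = k then 1 else 0 := by
    intro j k
    have h := Matrix.mem_unitaryGroup_iff'.mp hA
    have := congrFun (congrFun h j) k
    simpa [Matrix.mul_apply, Matrix.conjTranspose_apply, Matrix.one_apply] using this
  have hBu : ∀ j k, (∑ p, star (B p j) * B p k) = if j = k then 1 else 0 := by
    intro j k
    have h := Matrix.mem_unitaryGroup_iff'.mp hB
    have := congrFun (congrFun h j) k
    simpa [Matrix.mul_apply, Matrix.conjTranspose_apply, Matrix.one_apply] using this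
  have hCu : ∀ l m, (∑ i, C l i * star (C m i)) = if l = m then 1 else 0 := by
    intro l m
    have h := Matrix.mem_unitaryGroup_iff.mp hC
    have := congrFun (congrFun h l) m
    simpa [Matrix.mul_apply, Matrix.conjTranspose_apply, Matrix.one_apply] using this
  have hDu : ∀ l m, (∑ i, D l i * star (D m i)) = if l = m then 1 else 0 := by
    intro l m
    have h := Matrix.mem_unitaryGroup_iff.mp hD
    have := congrFun (congrFun h l) m
    simpa [Matrix.mul_apply, Matrix.conjTranspose_apply, Matrix.one_apply] using this
  -- key inner sums
  have key1 : ∀ i j k, (∑ p, star (ψ i j p) * ψ i k p) = if j = k then 1 else 0 := by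
    intro i j k
    have h : ∀ p, star (ψ i j p) * ψ i k p = star (B p j) * B p k := by
      intro p
      have h0 : star (ψ i j p) * ψ i k p =
          ((Real.sqrt n : ℂ) * (Real.sqrt n : ℂ)) * (star (A p i) * A p i) *
            (star (B p j) * B p k) := by
        simp only [hψ, star_mul', hsr]
        ring
      rw [h0, hs2, flatA]
      field_simp
    rw [Finset.sum_congr rfl fun p _ => h p, hBu]
  have key1' : ∀ i j k, (∑ p, star (ψ j i p) * ψ k i p) = if j = k then 1 else 0 := by
    intro i j k
    have h : ∀ p, star (ψ j i p) * ψ k i p = star (A p j) * A p k := by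
      intro p
      have h0 : star (ψ j i p) * ψ k i p =
          ((Real.sqrt n : ℂ) * (Real.sqrt n : ℂ)) * (star (B p i) * B p i) *
            (star (A p j) * A p k) := by
        simp only [hψ, star_mul', hsr]
        ring
      rw [h0, hs2, flatB]
      field_simp
    rw [Finset.sum_congr rfl fun p _ => h p, hAu]
  have key2 : ∀ j l m, (∑ i, φ i j l * star (φ i j m)) = if l = m then 1 else 0 := by
    intro j l m
    have h1 : ∀ i, φ i j l * star (φ i j m) =
        (n : ℂ) * (D l j * star (D m j)) * (C l i * star (C m i)) := by
      intro i
      simp only [hφ, star_mul', hsr]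
      rw [← hs2]
      ring
    rw [Finset.sum_congr rfl fun i _ => h1 i, ← Finset.mul_sum, hCu]
    by_cases hlm : l = m
    · subst hlm
      simp only [if_pos rfl, mul_one]
      have h2 : D l j * star (D l j) = (n : ℂ)⁻¹ := by rw [mul_comm]; exact flatD l j
      rw [h2]
      field_simp
    · simp [hlm]
  have key2' : ∀ j l m, (∑ i, φ j i l * star (φ j i m)) = if l = m then 1 else 0 := by
    intro j l m
    have h1 : ∀ i, φ j i l * star (φ j i m) =
        (n : ℂ) * (C l j * star (C m j)) * (D l i * star (D m i)) := by
      intro i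
      simp only [hφ, star_mul', hsr]
      rw [← hs2]
      ring
    rw [Finset.sum_congr rfl fun i _ => h1 i, ← Finset.mul_sum, hDu]
    by_cases hlm : l = m
    · subst hlm
      simp only [if_pos rfl, mul_one]
      have h2 : C l j * star (C l j) = (n : ℂ)⁻¹ := by rw [mul_comm]; exact flatC l j
      rw [h2]
      field_simp
    · simp [hlm]
  constructor
  · intro j k
    ext l m
    have expand : (∑ i, star (w i j) * w i k) l m =
        ∑ i, (φ i j l * star (φ i k m)) * (∑ p, star (ψ i j p) * ψ i k p) := by
      rw [Matrix.sum_apply]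
      refine Finset.sum_congr rfl fun i _ => ?_
      rw [Matrix.mul_apply, Finset.mul_sum]
      refine Finset.sum_congr rfl fun p _ => ?_
      simp only [hw, Matrix.star_apply, Matrix.of_apply, star_mul', star_star]
      ring
    rw [expand]
    by_cases hjk : j = k
    · subst hjk
      simp only [key1, if_pos, eq_self_iff_true, if_true, mul_one, Matrix.one_apply]
      exact key2 j l m
    · simp only [key1, if_neg hjk, mul_zero, Finset.sum_const_zero, Matrix.zero_apply]
  · intro j k
    ext l m
    have expand : (∑ i, star (w j i) * w k i) l m =
        ∑ i, (φ j i l * star (φ k i m)) * (∑ p, star (ψ j i p) * ψ k i p) := by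
      rw [Matrix.sum_apply]
      refine Finset.sum_congr rfl fun i _ => ?_
      rw [Matrix.mul_apply, Finset.mul_sum]
      refine Finset.sum_congr rfl fun p _ => ?_
      simp only [hw, Matrix.star_apply, Matrix.of_apply, star_mul', star_star]
      ring
    rw [expand]
    by_cases hjk : j = k
    · subst hjk
      simp only [key1', if_pos, eq_self_iff_true, if_true, mul_one, Matrix.one_apply]
      exact key2' j l m
    · simp only [key1', if_neg hjk, mul_zero, Finset.sum_const_zero, Matrix.zero_apply]
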